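/- arXiv:1602.00244 — 6 statements merged into one kernel-verified Lean document; each statement's English description precedes it below -/
import Mathlib

section
/- Let K be a field of characteristic zero and let g, h ∈ K⟦t⟧ with h having constant term 1. Then there exists a unique formal power series y ∈ K⟦t⟧ with constant term 0 satisfying y' = g·h(y), where y' is the formal derivative and h(y) is the composition of power series (well-defined since y has constant term 0). -/
open PowerSeries

/-- Composition `h(u)` of formal power series, intended for `u` with zero constant term
(in which case `coeff n (u ^ i) = 0` for `i > n`, so the truncated sum below is the
full substitution). -/
noncomputable def pcomp {R : Type*} [CommSemiring R] (h u : R⟦X⟧) : R⟦X⟧ :=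
  PowerSeries.mk fun n => ∑ i ∈ Finset.range (n + 1), coeff i h * coeff n (u ^ i)

lemma coeff_pow_congr {K : Type*} [CommSemiring K] (y z : K⟦X⟧) (n : ℕ)
    (hyz : ∀ m ≤ n, coeff m y = coeff m z) (i : ℕ) :
    ∀ m ≤ n, coeff m (y ^ i) = coeff m (z ^ i) := by
  induction i with
  | zero => intro m _; simp
  | succ i ih =>
    intro m hm
    rw [pow_succ, pow_succ, coeff_mul, coeff_mul]
    refine Finset.sum_congr rfl fun p hp => ?_
    rw [Finset.HasAntidiagonal.mem_antidiagonal] at hp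
    rw [ih p.1 (le_trans (by omega) hm), hyz p.2 (le_trans (by omega) hm)]

lemma coeff_rhs_congr {K : Type*} [CommSemiring K] (g h y z : K⟦X⟧) (n : ℕ)
    (hyz : ∀ m ≤ n, coeff m y = coeff m z) :
    coeff n (g * pcomp h y) = coeff n (g * pcomp h z) := by
  rw [coeff_mul, coeff_mul]
  refine Finset.sum_congr rfl fun p hp => ?_
  rw [Finset.HasAntidiagonal.mem_antidiagonal] at hp
  have hp2 : p.2 ≤ n := by omega
  congr 1
  simp only [pcomp, coeff_mk]
  refine Finset.sum_congr rfl fun i _ => ?_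
  rw [coeff_pow_congr y z n hyz i p.2 hp2]

/-- Partial solutions built by recursion on coefficients. -/
noncomputable def psol {K : Type*} [Field K] (g h : K⟦X⟧) : ℕ → K⟦X⟧
  | 0 => 0
  | n + 1 => psol g h n +
      PowerSeries.C (((n : K) + 1)⁻¹ * coeff n (g * pcomp h (psol g h n))) * X ^ (n + 1)

lemma psol_coeff_zero_of_lt {K : Type*} [Field K] (g h : K⟦X⟧) :
    ∀ n m, n < m → coeff m (psol g h n) = 0 := by
  intro n
  induction n with
  | zero => intro m _; simp [psol]
  | succ n ih =>
    intro m hm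
    simp only [psol, map_add, coeff_C_mul, coeff_X_pow]
    rw [ih m (by omega), if_neg (by omega : ¬ m = n + 1)]
    ring

lemma psol_coeff_stable {K : Type*} [Field K] (g h : K⟦X⟧) (m : ℕ) :
    ∀ n, m ≤ n → coeff m (psol g h n) = coeff m (psol g h m) := by
  intro n
  induction n with
  | zero => intro hn; rw [Nat.le_zero.mp hn]
  | succ n ih =>
    intro hn
    rcases Nat.lt_or_ge m (n + 1) with hlt | hge
    · have := ih (by omega)
      simp only [psol, map_add, coeff_C_mul, coeff_X_pow, if_neg (by omega : ¬ m = n + 1)]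
      rw [this]; ring
    · have : m = n + 1 := by omega
      subst this; rfl

/-- existence and uniqueness of the solution of `y' = g · h(y)`, `y(0) = 0`. -/
theorem stmt0 {K : Type*} [Field K] [CharZero K] (g h : K⟦X⟧)
    (hh : constantCoeff h = 1) :
    ∃! y : K⟦X⟧, constantCoeff y = 0 ∧ derivativeFun y = g * pcomp h y := by
  set y : K⟦X⟧ := PowerSeries.mk fun n => coeff n (psol g h n) with hy
  have hagree : ∀ n m, m ≤ n → coeff m y = coeff m (psol g h n) := by
    intro n m hmn
    rw [hy, coeff_mk, psol_coeff_stable g h m n hmn]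
  have hy0 : constantCoeff y = 0 := by
    rw [← coeff_zero_eq_constantCoeff, hagree 0 0 le_rfl]
    simp [psol]
  have hcoeff : ∀ n : ℕ, coeff (n + 1) y * ((n : K) + 1) = coeff n (g * pcomp h y) := by
    intro n
    have h1 : coeff (n + 1) y = coeff (n + 1) (psol g h (n + 1)) := hagree (n + 1) (n + 1) le_rfl
    have h2 : coeff (n + 1) (psol g h (n + 1)) =
        ((n : K) + 1)⁻¹ * coeff n (g * pcomp h (psol g h n)) := by
      simp only [psol, map_add, coeff_C_mul, coeff_X_pow, if_pos rfl, if_true,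
        psol_coeff_zero_of_lt g h n (n + 1) (by omega)]
      ring
    have h3 : coeff n (g * pcomp h (psol g h n)) = coeff n (g * pcomp h y) :=
      coeff_rhs_congr g h _ y n (fun m hm => (hagree n m hm).symm)
    have hne : ((n : K) + 1) ≠ 0 := Nat.cast_add_one_ne_zero n
    rw [h1, h2, h3]
    push_cast
    field_simp
  refine ⟨y, ⟨hy0, ?_⟩, ?_⟩
  · ext n
    rw [show y.derivativeFun = derivative K y from rfl, coeff_derivativeFun, hcoeff n]
  · rintro z ⟨hz0, hz⟩
    ext n
    induction n using Nat.strong_induction_on with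
    | _ n ih =>
      match n with
      | 0 =>
        simp only [coeff_zero_eq_constantCoeff] at *
        rw [hz0, hy0]
      | n + 1 =>
        have hzc : coeff (n + 1) z * ((n : K) + 1) = coeff n (g * pcomp h z) := by
          rw [← coeff_derivativeFun, ← show z.derivativeFun = derivative K z from rfl, hz]
        have hrhs : coeff n (g * pcomp h z) = coeff n (g * pcomp h y) :=
          coeff_rhs_congr g h z y n (fun m hm => ih m (by omega))
        have hne : ((n : K) + 1) ≠ 0 := Nat.cast_add_one_ne_zero n
        have heq : coeff (n + 1) z * ((n : K) + 1) =
            coeff (n + 1) y * ((n : K) + 1) := by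
          rw [hzc, hrhs, hcoeff n]
        exact mul_right_cancel₀ hne heq
end

section
/- Let g, u ∈ K⟦t⟧ with u having constant term 0, and let n ≥ 1. If u ≡ Y(g) (mod t^n), then N_g(u) ≡ Y(g) (mod t^{2n}), where N_g(u) = u - h(u)·∫(u'/h(u) - g) is the Newton operator. -/
open PowerSeries

/-- Formal integral: the unique `F` with `F' = f` and `F(0) = 0`. -/
noncomputable def pint {K : Type*} [Field K] (f : K⟦X⟧) : K⟦X⟧ :=
  PowerSeries.mk fun n => if n = 0 then 0 else coeff (n - 1) f / (n : K)

namespace NewtonAux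

variable {K : Type*} [Field K]

lemma coeff_derivativeFun' (f : K⟦X⟧) (n : ℕ) :
    coeff n (derivativeFun f) = coeff (n + 1) f * (n + 1) := coeff_derivative f n

lemma derivativeFun_C' (r : K) : derivativeFun (C r : K⟦X⟧) = 0 := derivative_C

lemma coeff_pow_eq_zero {w : K⟦X⟧} (hw : constantCoeff w = 0)
    {m i : ℕ} (h : m < i) : coeff m (w ^ i) = 0 :=
  X_pow_dvd_iff.mp (pow_dvd_pow_of_dvd (X_dvd_iff.mpr hw) i) m h

/-- Truncated composition as a finite sum. -/
noncomputable def sS (h w : K⟦X⟧) (N : ℕ) : K⟦X⟧ :=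
  ∑ i ∈ Finset.range N, PowerSeries.C (coeff i h) * w ^ i

lemma pcomp_sub_sS (h w : K⟦X⟧) (hw : constantCoeff w = 0) (N : ℕ) :
    (X : K⟦X⟧) ^ N ∣ pcomp h w - sS h w N := by
  rw [X_pow_dvd_iff]
  intro m hm
  rw [map_sub, sub_eq_zero, pcomp, coeff_mk, sS, map_sum]
  simp only [coeff_C_mul]
  refine (Finset.sum_subset (Finset.range_subset_range.mpr hm) fun i _ hi => ?_)
  rw [coeff_pow_eq_zero hw (by simpa using hi), mul_zero]

lemma derivativeFun_sub (a b : K⟦X⟧) :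
    derivativeFun (a - b) = derivativeFun a - derivativeFun b := by
  ext m
  simp [coeff_derivativeFun', sub_mul]

lemma X_pow_dvd_derivativeFun {k : ℕ} {f : K⟦X⟧} (h : (X : K⟦X⟧) ^ (k+1) ∣ f) :
    (X : K⟦X⟧) ^ k ∣ derivativeFun f := by
  rw [X_pow_dvd_iff] at h ⊢
  intro m hm
  rw [coeff_derivativeFun', h (m+1) (by omega), zero_mul]

lemma constantCoeff_pint (f : K⟦X⟧) : constantCoeff (pint f) = 0 := by
  rw [← coeff_zero_eq_constantCoeff_apply, pint, coeff_mk, if_pos rfl]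

lemma derivativeFun_pint [CharZero K] (f : K⟦X⟧) : derivativeFun (pint f) = f := by
  ext m
  rw [coeff_derivativeFun', pint, coeff_mk, if_neg (Nat.succ_ne_zero m)]
  simp only [Nat.add_sub_cancel]
  push_cast
  exact div_mul_cancel₀ _ (Nat.cast_add_one_ne_zero m)

lemma dvd_of_constantCoeff_of_deriv [CharZero K] {k : ℕ} {a : K⟦X⟧}
    (h0 : constantCoeff a = 0) (h : (X : K⟦X⟧) ^ k ∣ derivativeFun a) :
    (X : K⟦X⟧) ^ (k+1) ∣ a := by
  rw [X_pow_dvd_iff] at h ⊢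
  intro m hm
  match m with
  | 0 => simpa using h0
  | j+1 =>
    have := h j (by omega)
    rw [coeff_derivativeFun'] at this
    have hne : ((j:K)+1) ≠ 0 := Nat.cast_add_one_ne_zero j
    rcases mul_eq_zero.mp this with h' | h'
    · exact h'
    · exact absurd (by exact_mod_cast h') hne

lemma constantCoeff_pcomp (h w : K⟦X⟧) (_hw : constantCoeff w = 0) :
    constantCoeff (pcomp h w) = constantCoeff h := by
  rw [← coeff_zero_eq_constantCoeff_apply, pcomp, coeff_mk]
  simp

lemma sS_derivativeFun (h w : K⟦X⟧) (N : ℕ) :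
    derivativeFun (sS h w (N+1)) = derivativeFun w * sS (derivativeFun h) w N := by
  have hmap : derivativeFun (sS h w (N+1))
      = ∑ i ∈ Finset.range (N+1), derivativeFun (C (coeff i h) * w ^ i) := by
    rw [sS]
    exact map_sum (d⁄dX K).toLinearMap _ _
  rw [hmap]
  have hterm : ∀ i, derivativeFun (C (coeff i h) * w ^ i)
      = C (coeff i h) * ((i : K⟦X⟧) * w ^ (i-1) * derivativeFun w) := by
    intro i
    have hdp : derivativeFun (w ^ i) = (i : K⟦X⟧) * (w ^ (i-1) * derivativeFun w) := by
      have := Derivation.leibniz_pow (d⁄dX K) (a := w) i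
      rw [nsmul_eq_mul, smul_eq_mul] at this
      exact this
    rw [derivativeFun_mul, derivativeFun_C', hdp]
    simp only [smul_eq_mul, mul_zero, add_zero]
    ring
  simp only [hterm]
  rw [Finset.sum_range_succ', sS, Finset.mul_sum]
  simp only [Nat.cast_zero, zero_mul, mul_zero, add_zero, Nat.add_sub_cancel]
  refine Finset.sum_congr rfl fun j _ => ?_
  rw [coeff_derivativeFun', map_mul, ← map_natCast (C : K →+* K⟦X⟧) (j+1)]
  push_cast
  ring

end NewtonAux

namespace NewtonAux
variable {K : Type*} [Field K]

lemma derivativeFun_pcomp (h w : K⟦X⟧) (hw : constantCoeff w = 0) :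
    derivativeFun (pcomp h w) = derivativeFun w * pcomp (derivativeFun h) w := by
  ext m
  have h1 : (X:K⟦X⟧)^(m+1) ∣ derivativeFun (pcomp h w) - derivativeFun (sS h w (m+2)) := by
    rw [← derivativeFun_sub]
    exact X_pow_dvd_derivativeFun (pcomp_sub_sS h w hw (m+2))
  have h2 : (X:K⟦X⟧)^(m+1) ∣ derivativeFun w * pcomp (derivativeFun h) w
      - derivativeFun w * sS (derivativeFun h) w (m+1) := by
    rw [← mul_sub]
    exact Dvd.dvd.mul_left (pcomp_sub_sS (derivativeFun h) w hw (m+1)) _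
  have e1 : coeff m (derivativeFun (pcomp h w)) = coeff m (derivativeFun (sS h w (m+2))) := by
    have := X_pow_dvd_iff.mp h1 m (Nat.lt_succ_self m)
    rwa [map_sub, sub_eq_zero] at this
  have e2 : coeff m (derivativeFun w * pcomp (derivativeFun h) w)
      = coeff m (derivativeFun w * sS (derivativeFun h) w (m+1)) := by
    have := X_pow_dvd_iff.mp h2 m (Nat.lt_succ_self m)
    rwa [map_sub, sub_eq_zero] at this
  rw [e1, e2, show m + 2 = (m+1)+1 from rfl, sS_derivativeFun]

lemma sS_T (h w y : K⟦X⟧) (N : ℕ) :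
    ∑ i ∈ Finset.range (N+1), C (coeff i h) * ((i : K⟦X⟧) * (w * y ^ (i-1)))
      = w * sS (derivativeFun h) y N := by
  rw [Finset.sum_range_succ', sS, Finset.mul_sum]
  simp only [Nat.cast_zero, zero_mul, mul_zero, add_zero, Nat.add_sub_cancel]
  refine Finset.sum_congr rfl fun j _ => ?_
  rw [coeff_derivativeFun', map_mul, ← map_natCast (C : K →+* K⟦X⟧) (j+1)]
  push_cast
  ring

lemma pow_taylor (u y : K⟦X⟧) {n : ℕ} (hv : (X:K⟦X⟧)^n ∣ u - y) (i : ℕ) :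
    (X:K⟦X⟧)^(2*n) ∣ u^i - y^i - (i:K⟦X⟧) * ((u-y) * y^(i-1)) := by
  cases i with
  | zero => simp
  | succ j =>
    have hgeom : u^(j+1) - y^(j+1) = (∑ k ∈ Finset.range (j+1), u^k * y^(j-k)) * (u-y) := by
      rw [← geom_sum₂_mul u y (j+1)]
      simp
    have hconst : ((j+1 : ℕ):K⟦X⟧) * ((u-y) * y^((j+1)-1))
        = (∑ _k ∈ Finset.range (j+1), y^j) * (u-y) := by
      rw [Finset.sum_const, Finset.card_range, nsmul_eq_mul, Nat.add_sub_cancel]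
      push_cast; ring
    push_cast at hconst ⊢
    rw [hgeom, hconst, ← sub_mul, ← Finset.sum_sub_distrib]
    rw [two_mul, pow_add]
    refine mul_dvd_mul (Finset.dvd_sum fun k hk => ?_) hv
    have hk' : k ≤ j := Nat.lt_succ_iff.mp (Finset.mem_range.mp hk)
    have : u^k * y^(j-k) - y^j = (u^k - y^k) * y^(j-k) := by
      rw [sub_mul, ← pow_add]
      congr 2
      omega
    rw [this]
    exact Dvd.dvd.mul_right (dvd_trans hv (sub_dvd_pow_sub_pow u y k)) _

lemma taylor_pcomp (h u y : K⟦X⟧) (hu0 : constantCoeff u = 0) (hy0 : constantCoeff y = 0)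
    {n : ℕ} (hv : (X:K⟦X⟧)^n ∣ u - y) :
    (X:K⟦X⟧)^(2*n) ∣ pcomp h u - pcomp h y - (u - y) * pcomp (derivativeFun h) y := by
  have le1 : (X:K⟦X⟧)^(2*n) ∣ (X:K⟦X⟧)^(2*n+1) := pow_dvd_pow X (Nat.le_succ _)
  have p1 : (X:K⟦X⟧)^(2*n) ∣ pcomp h u - sS h u (2*n+1) :=
    le1.trans (pcomp_sub_sS h u hu0 (2*n+1))
  have p2 : (X:K⟦X⟧)^(2*n) ∣ pcomp h y - sS h y (2*n+1) :=
    le1.trans (pcomp_sub_sS h y hy0 (2*n+1))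
  have p3 : (X:K⟦X⟧)^(2*n) ∣ (u-y) * (pcomp (derivativeFun h) y - sS (derivativeFun h) y (2*n)) :=
    Dvd.dvd.mul_left (pcomp_sub_sS (derivativeFun h) y hy0 (2*n)) _
  have key : (X:K⟦X⟧)^(2*n) ∣ sS h u (2*n+1) - sS h y (2*n+1)
      - (u-y) * sS (derivativeFun h) y (2*n) := by
    have : sS h u (2*n+1) - sS h y (2*n+1) - (u-y) * sS (derivativeFun h) y (2*n)
        = ∑ i ∈ Finset.range (2*n+1),
            C (coeff i h) * (u^i - y^i - (i:K⟦X⟧) * ((u-y) * y^(i-1))) := by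
      rw [← sS_T h (u-y) y (2*n), sS, sS, ← Finset.sum_sub_distrib, ← Finset.sum_sub_distrib]
      exact Finset.sum_congr rfl fun i _ => by ring
    rw [this]
    exact Finset.dvd_sum fun i _ => Dvd.dvd.mul_left (pow_taylor u y hv i) _
  have heq : pcomp h u - pcomp h y - (u - y) * pcomp (derivativeFun h) y
      = (pcomp h u - sS h u (2*n+1)) - (pcomp h y - sS h y (2*n+1))
        - (u-y) * (pcomp (derivativeFun h) y - sS (derivativeFun h) y (2*n))
        + (sS h u (2*n+1) - sS h y (2*n+1) - (u-y) * sS (derivativeFun h) y (2*n)) := by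
    ring
  rw [heq]
  exact dvd_add (dvd_sub (dvd_sub p1 p2) p3) key

end NewtonAux

/-- the Newton operator `N_g(u) = u - h(u)·∫(u'/h(u) - g)` doubles the
`t`-adic accuracy of an approximation of the solution `Y(g)` of `y' = g·h(y)`, `y(0)=0`. -/
theorem stmt1 {K : Type*} [Field K] [CharZero K] (g h u y : K⟦X⟧)
    (hh : constantCoeff h = 1) (hu : constantCoeff u = 0)
    (hy0 : constantCoeff y = 0) (hy : derivativeFun y = g * pcomp h y)
    (n : ℕ) (hn : 1 ≤ n)
    (hcong : ∀ i < n, coeff i u = coeff i y) :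
    ∀ i < 2 * n,
      coeff i (u - pcomp h u * pint (derivativeFun u * (pcomp h u)⁻¹ - g)) = coeff i y := by
  have hH0 : constantCoeff (pcomp h u) = 1 := by
    rw [NewtonAux.constantCoeff_pcomp h u hu, hh]
  have hHy0 : constantCoeff (pcomp h y) = 1 := by
    rw [NewtonAux.constantCoeff_pcomp h y hy0, hh]
  have hHunit : pcomp h u * (pcomp h u)⁻¹ = 1 :=
    PowerSeries.mul_inv_cancel _ (by rw [hH0]; exact one_ne_zero)
  have hHyunit : pcomp h y * (pcomp h y)⁻¹ = 1 :=
    PowerSeries.mul_inv_cancel _ (by rw [hHy0]; exact one_ne_zero)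
  have hv : (X:K⟦X⟧)^n ∣ u - y := by
    rw [X_pow_dvd_iff]
    intro m hm
    rw [map_sub, hcong m hm, sub_self]
  obtain ⟨R, hR⟩ := NewtonAux.taylor_pcomp h u y hu hy0 hv
  rw [sub_eq_iff_eq_add] at hR
  -- hR : pcomp h u - pcomp h y = (u - y) * pcomp (derivativeFun h) y + X ^ (2 * n) * R
  have hg : g = derivativeFun y * (pcomp h y)⁻¹ := by
    rw [hy, mul_assoc, hHyunit, mul_one]
  have dHyi : derivativeFun ((pcomp h y)⁻¹)
      = -(derivativeFun y * pcomp (derivativeFun h) y) * ((pcomp h y)⁻¹ * (pcomp h y)⁻¹) := by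
    have hone : derivativeFun (pcomp h y * (pcomp h y)⁻¹) = 0 := by
      rw [hHyunit]; exact derivativeFun_one
    rw [derivativeFun_mul, smul_eq_mul, smul_eq_mul] at hone
    rw [← NewtonAux.derivativeFun_pcomp h y hy0]
    linear_combination (pcomp h y)⁻¹ * hone - derivativeFun ((pcomp h y)⁻¹) * hHyunit
  have EΔ : derivativeFun ((u - y) * (pcomp h y)⁻¹
        - pint (derivativeFun u * (pcomp h u)⁻¹ - g))
      = (derivativeFun u * ((pcomp h u)⁻¹ * (pcomp h y)⁻¹)
          - derivativeFun y * ((pcomp h y)⁻¹ * (pcomp h y)⁻¹))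
          * ((u - y) * pcomp (derivativeFun h) y)
        + (derivativeFun u * ((pcomp h u)⁻¹ * (pcomp h y)⁻¹)) * ((X:K⟦X⟧) ^ (2*n) * R) := by
    rw [NewtonAux.derivativeFun_sub, NewtonAux.derivativeFun_pint, derivativeFun_mul,
        smul_eq_mul, smul_eq_mul, dHyi, NewtonAux.derivativeFun_sub u y, hg]
    linear_combination (-(derivativeFun u * (pcomp h y)⁻¹)) * hHunit
      + (derivativeFun u * (pcomp h u)⁻¹) * hHyunit
      + (derivativeFun u * (pcomp h u)⁻¹ * (pcomp h y)⁻¹) * hR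
  have hHHy : (X:K⟦X⟧)^n ∣ pcomp h y - pcomp h u := by
    have hsw : pcomp h y - pcomp h u = -((u - y) * pcomp (derivativeFun h) y + X^(2*n)*R) := by
      linear_combination -hR
    rw [hsw]
    exact dvd_neg.mpr (dvd_add (hv.mul_right _)
      ((pow_dvd_pow X (by omega : n ≤ 2*n)).trans (dvd_mul_right _ R)))
  -- the main quadratic estimate
  have M : (X:K⟦X⟧)^(2*n) ∣ (u - y) * (pcomp h y)⁻¹
      - pint (derivativeFun u * (pcomp h u)⁻¹ - g) := by
    rw [show 2*n = (2*n-1)+1 by omega]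
    refine NewtonAux.dvd_of_constantCoeff_of_deriv ?_ ?_
    · rw [map_sub, map_mul, map_sub, hu, hy0, sub_self, zero_mul,
        NewtonAux.constantCoeff_pint, sub_self]
    · rw [EΔ]
      refine dvd_add ?_ ?_
      · have hIJ : (pcomp h u)⁻¹ - (pcomp h y)⁻¹
            = (pcomp h u)⁻¹ * (pcomp h y)⁻¹ * (pcomp h y - pcomp h u) := by
          linear_combination (pcomp h y)⁻¹ * hHunit - (pcomp h u)⁻¹ * hHyunit
        have a1 : (X:K⟦X⟧)^(n-1) ∣ (pcomp h u)⁻¹ - (pcomp h y)⁻¹ := by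
          refine (pow_dvd_pow X (by omega : n-1 ≤ n)).trans ?_
          rw [hIJ]
          exact hHHy.mul_left _
        have b1 : (X:K⟦X⟧)^(n-1) ∣ derivativeFun u - derivativeFun y := by
          have := NewtonAux.X_pow_dvd_derivativeFun (k := n-1)
            (by rw [show (n-1)+1 = n by omega]; exact hv)
          rwa [NewtonAux.derivativeFun_sub] at this
        have q1 : (X:K⟦X⟧)^(n-1) ∣ derivativeFun u * (pcomp h u)⁻¹
            - derivativeFun y * (pcomp h y)⁻¹ := by
          have hre : derivativeFun u * (pcomp h u)⁻¹ - derivativeFun y * (pcomp h y)⁻¹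
              = derivativeFun u * ((pcomp h u)⁻¹ - (pcomp h y)⁻¹)
                + (derivativeFun u - derivativeFun y) * (pcomp h y)⁻¹ := by ring
          rw [hre]
          exact dvd_add (a1.mul_left _) (b1.mul_right _)
        have hre2 : (derivativeFun u * ((pcomp h u)⁻¹ * (pcomp h y)⁻¹)
              - derivativeFun y * ((pcomp h y)⁻¹ * (pcomp h y)⁻¹))
              * ((u - y) * pcomp (derivativeFun h) y)
            = ((derivativeFun u * (pcomp h u)⁻¹ - derivativeFun y * (pcomp h y)⁻¹) * (u - y))
              * ((pcomp h y)⁻¹ * pcomp (derivativeFun h) y) := by ring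
        rw [hre2]
        refine Dvd.dvd.mul_right ?_ _
        rw [show 2*n-1 = (n-1)+n by omega, pow_add]
        exact mul_dvd_mul q1 hv
      · refine ((pow_dvd_pow X (by omega : 2*n-1 ≤ 2*n)).trans (dvd_mul_right _ R)).mul_left _
  -- assemble
  suffices hbig : (X:K⟦X⟧)^(2*n) ∣
      (u - pcomp h u * pint (derivativeFun u * (pcomp h u)⁻¹ - g) - y) by
    intro i hi
    have := X_pow_dvd_iff.mp hbig i hi
    rwa [map_sub, sub_eq_zero] at this
  have split : u - pcomp h u * pint (derivativeFun u * (pcomp h u)⁻¹ - g) - y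
      = pcomp h y * ((u - y) * (pcomp h y)⁻¹ - pint (derivativeFun u * (pcomp h u)⁻¹ - g))
        + (pcomp h y - pcomp h u) * pint (derivativeFun u * (pcomp h u)⁻¹ - g) := by
    linear_combination (-(u - y)) * hHyunit
  rw [split]
  refine dvd_add (M.mul_left _) ?_
  have hE : (X:K⟦X⟧)^n ∣ pint (derivativeFun u * (pcomp h u)⁻¹ - g) := by
    have := dvd_sub (hv.mul_right ((pcomp h y)⁻¹))
      ((pow_dvd_pow X (by omega : n ≤ 2*n)).trans M)
    simpa using this
  rw [two_mul, pow_add]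
  exact mul_dvd_mul hHHy hE
end

section
/- Let g, u ∈ K⟦t⟧ with u having constant term 0, and let n ≥ 1. If u ≡ Y(g) (mod t^n), then the residual e := u'/h(u) - g satisfies e ≡ 0 (mod t^{n-1}) and ∫e ≡ 0 (mod t^n). -/
open PowerSeries

lemma pcomp_congr {K : Type*} [Field K] (h u y : K⟦X⟧) (n : ℕ)
    (hd : (X : K⟦X⟧) ^ n ∣ u - y) : (X : K⟦X⟧) ^ n ∣ pcomp h u - pcomp h y := by
  rw [PowerSeries.X_pow_dvd_iff] at hd ⊢
  intro m hm
  simp only [map_sub, pcomp, coeff_mk, ← Finset.sum_sub_distrib, ← mul_sub]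
  refine Finset.sum_eq_zero fun i _ => ?_
  have : (coeff m) (u ^ i) - coeff m (y ^ i) = coeff m (u ^ i - y ^ i) := by
    rw [map_sub]
  rw [this]
  have hdvd : (X : K⟦X⟧) ^ n ∣ u ^ i - y ^ i :=
    dvd_trans (by rw [PowerSeries.X_pow_dvd_iff]; exact hd) (sub_dvd_pow_sub_pow u y i)
  rw [PowerSeries.X_pow_dvd_iff] at hdvd
  rw [hdvd m hm, mul_zero]

/-- if `u ≡ Y(g) (mod t^n)` then the residual `e = u'/h(u) - g` satisfies
`e ≡ 0 (mod t^{n-1})` and `∫e ≡ 0 (mod t^n)`. -/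
theorem stmt2 {K : Type*} [Field K] [CharZero K] (g h u y : K⟦X⟧)
    (hh : constantCoeff h = 1) (hu : constantCoeff u = 0)
    (hy0 : constantCoeff y = 0) (hy : derivativeFun y = g * pcomp h y)
    (n : ℕ) (hn : 1 ≤ n)
    (hcong : ∀ i < n, coeff i u = coeff i y) :
    (∀ i < n - 1, coeff i (derivativeFun u * (pcomp h u)⁻¹ - g) = 0) ∧
    (∀ i < n, coeff i (pint (derivativeFun u * (pcomp h u)⁻¹ - g)) = 0) := by
  have hd : (X : K⟦X⟧) ^ n ∣ u - y := by
    rw [PowerSeries.X_pow_dvd_iff]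
    intro m hm; rw [map_sub, hcong m hm, sub_self]
  have hcomp := pcomp_congr h u y n hd
  -- constant coeff of pcomp h u is 1
  have hc1 : constantCoeff (pcomp h u) = 1 := by
    rw [← coeff_zero_eq_constantCoeff_apply]
    simp [pcomp, coeff_mk, coeff_zero_eq_constantCoeff_apply, hh]
  have hc0 : constantCoeff (pcomp h u) ≠ 0 := by rw [hc1]; exact one_ne_zero
  -- derivative congruence
  have hderiv : (X : K⟦X⟧) ^ (n - 1) ∣ derivativeFun u - derivativeFun y := by
    rw [PowerSeries.X_pow_dvd_iff]
    intro m hm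
    rw [map_sub]
    change coeff m (derivative K u) - coeff m (derivative K y) = 0
    rw [coeff_derivative, coeff_derivative, hcong (m + 1) (by omega),
      sub_self]
  -- E * pcomp h u divisible by X^(n-1)
  set E := derivativeFun u * (pcomp h u)⁻¹ - g with hE
  have key : (X : K⟦X⟧) ^ (n - 1) ∣ E * pcomp h u := by
    have hEmul : E * pcomp h u = (derivativeFun u - derivativeFun y)
        - g * (pcomp h u - pcomp h y) := by
      rw [hE, sub_mul, mul_assoc, PowerSeries.inv_mul_cancel _ hc0, mul_one, hy]
      ring
    rw [hEmul]
    exact dvd_sub hderiv (Dvd.dvd.mul_left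
      (dvd_trans (pow_dvd_pow _ (Nat.sub_le n 1)) hcomp) g)
  have keyE : (X : K⟦X⟧) ^ (n - 1) ∣ E := by
    have : E = E * pcomp h u * (pcomp h u)⁻¹ := by
      rw [mul_assoc, PowerSeries.mul_inv_cancel _ hc0, mul_one]
    rw [this]
    exact Dvd.dvd.mul_right key _
  rw [PowerSeries.X_pow_dvd_iff] at keyE
  refine ⟨keyE, fun i hi => ?_⟩
  rcases Nat.eq_zero_or_pos i with h0 | h0
  · simp [pint, h0]
  · have : coeff (i - 1) E = 0 := keyE (i - 1) (by omega)
    simp [pint, Nat.pos_iff_ne_zero.mp h0, this]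
end

section
/- Let g ∈ K⟦t⟧, let m ≥ 0, and let v ∈ K⟦t⟧ with constant term 0. If v' - g·h(v) ≡ 0 (mod t^m), then v ≡ Y(g) (mod t^{m+1}). -/
open PowerSeries

lemma pow_coeff_congr {K : Type*} [CommSemiring K] (v w : K⟦X⟧) (n : ℕ)
    (hvw : ∀ j ≤ n, coeff j v = coeff j w) (i : ℕ) :
    ∀ k ≤ n, coeff k (v ^ i) = coeff k (w ^ i) := by
  induction i with
  | zero => intro k _; simp
  | succ i ih =>
    intro k hk
    rw [pow_succ', pow_succ', coeff_mul, coeff_mul]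
    refine Finset.sum_congr rfl fun p hp => ?_
    rw [Finset.HasAntidiagonal.mem_antidiagonal] at hp
    rw [hvw p.1 (le_trans (by omega) hk), ih p.2 (le_trans (by omega) hk)]

lemma pcomp_coeff_congr {K : Type*} [CommSemiring K] (h v w : K⟦X⟧) (n : ℕ)
    (hvw : ∀ j ≤ n, coeff j v = coeff j w) :
    ∀ k ≤ n, coeff k (pcomp h v) = coeff k (pcomp h w) := by
  intro k hk
  simp only [pcomp, coeff_mk]
  refine Finset.sum_congr rfl fun i _ => ?_
  rw [pow_coeff_congr v w n hvw i k hk]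

lemma mul_pcomp_coeff_congr {K : Type*} [CommSemiring K] (g h v w : K⟦X⟧) (n : ℕ)
    (hvw : ∀ j ≤ n, coeff j v = coeff j w) :
    coeff n (g * pcomp h v) = coeff n (g * pcomp h w) := by
  rw [coeff_mul, coeff_mul]
  refine Finset.sum_congr rfl fun p hp => ?_
  rw [Finset.HasAntidiagonal.mem_antidiagonal] at hp
  rw [pcomp_coeff_congr h v w n hvw p.2 (by omega)]

/-- if `v(0) = 0` and `v' - g·h(v) ≡ 0 (mod t^m)`, then `v ≡ Y(g) (mod t^{m+1})`. -/
theorem stmt4 {K : Type*} [Field K] [CharZero K] (g h v y : K⟦X⟧)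
    (hh : constantCoeff h = 1) (hv : constantCoeff v = 0)
    (hy0 : constantCoeff y = 0) (hy : derivativeFun y = g * pcomp h y)
    (m : ℕ)
    (hres : ∀ i < m, coeff i (derivativeFun v - g * pcomp h v) = 0) :
    ∀ i < m + 1, coeff i v = coeff i y := by
  intro i hi
  induction i using Nat.strong_induction_on with
  | _ i ih =>
    match i with
    | 0 => simp [coeff_zero_eq_constantCoeff, hv, hy0]
    | k + 1 =>
      have hk : k < m := by omega
      have h1 : coeff k (derivativeFun v) = coeff k (g * pcomp h v) := by
        have := hres k hk
        rw [map_sub, sub_eq_zero] at this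
        exact this
      have h2 : coeff k (g * pcomp h v) = coeff k (g * pcomp h y) :=
        mul_pcomp_coeff_congr g h v y k (fun j hj => ih j (by omega) (by omega))
      have h3 : coeff k (derivativeFun v) = coeff k (derivativeFun y) := by
        rw [h1, h2, hy]
      change coeff k (derivative K v) = coeff k (derivative K y) at h3
      rw [coeff_derivative, coeff_derivative] at h3
      exact mul_right_cancel₀ (Nat.cast_add_one_ne_zero k) h3
end

section
/- Let g, w ∈ K⟦t⟧ and set y = Y(g). Then z = h(y)·∫w is the unique power series z ∈ K⟦t⟧ with constant term 0 satisfying the linear (variational) differential equation z' = w·h(y) + g·h'(y)·z. -/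
open PowerSeries

lemma coeff_derivativeFun' {R : Type*} [CommSemiring R] (f : R⟦X⟧) (n : ℕ) :
    coeff n (derivativeFun f) = coeff (n + 1) f * (n + 1) := coeff_derivative f n

lemma derivativeFun_C' {R : Type*} [CommSemiring R] (r : R) :
    derivativeFun (C r : R⟦X⟧) = 0 := derivative_C

lemma coeff_pow_eq_zero' {R : Type*} [CommSemiring R] {u : R⟦X⟧}
    (hu : constantCoeff u = 0) {n i : ℕ} (hni : n < i) : coeff n (u ^ i) = 0 := by
  obtain ⟨v, hv⟩ := PowerSeries.X_dvd_iff.mpr hu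
  rw [hv, mul_pow, coeff_X_pow_mul', if_neg (by omega)]

lemma coeff_pcomp_trunc {R : Type*} [CommSemiring R] (h u : R⟦X⟧)
    (hu : constantCoeff u = 0) {n N : ℕ} (hN : n < N) :
    coeff n (pcomp h u) = coeff n (∑ i ∈ Finset.range N, C (coeff i h) * u ^ i) := by
  rw [pcomp, coeff_mk, map_sum]
  simp only [coeff_C_mul]
  apply Finset.sum_subset
  · intro i hi
    simp only [Finset.mem_range] at hi ⊢
    omega
  · intro i _ hi
    simp only [Finset.mem_range, not_lt] at hi
    rw [coeff_pow_eq_zero' hu (by omega), mul_zero]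

lemma derivativeFun_sub {K : Type*} [CommRing K] (f g : K⟦X⟧) :
    derivativeFun (f - g) = derivativeFun f - derivativeFun g := by
  ext n
  simp [coeff_derivativeFun', sub_mul]

lemma derivativeFun_pow_succ {K : Type*} [CommRing K] (u : K⟦X⟧) (i : ℕ) :
    derivativeFun (u ^ (i + 1)) = ((i : K⟦X⟧) + 1) * u ^ i * derivativeFun u := by
  induction i with
  | zero => simp [pow_one]
  | succ i ih =>
    rw [pow_succ, derivativeFun_mul, ih]
    simp only [smul_eq_mul]
    push_cast
    ring

lemma derivativeFun_pcomp {K : Type*} [CommRing K] (h u : K⟦X⟧)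
    (hu : constantCoeff u = 0) :
    derivativeFun (pcomp h u) = pcomp (derivativeFun h) u * derivativeFun u := by
  ext n
  rw [coeff_derivativeFun', coeff_pcomp_trunc h u hu (Nat.lt_succ_self (n + 1))]
  have key : coeff (n + 1) (∑ i ∈ Finset.range (n + 2), C (coeff i h) * u ^ i) * (n + 1)
      = coeff n (derivativeFun (∑ i ∈ Finset.range (n + 2), C (coeff i h) * u ^ i)) := by
    rw [coeff_derivativeFun']
  rw [key]
  have hD : derivativeFun (∑ i ∈ Finset.range (n + 2), C (coeff i h) * u ^ i)
      = (∑ j ∈ Finset.range (n + 1), C (coeff j (derivativeFun h)) * u ^ j)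
        * derivativeFun u := by
    have step : ∀ (m : ℕ) (f : ℕ → K⟦X⟧),
        derivativeFun (∑ i ∈ Finset.range m, f i)
          = ∑ i ∈ Finset.range m, derivativeFun (f i) := by
      intro m f
      induction m with
      | zero => simp [derivativeFun]
      | succ m ih => rw [Finset.sum_range_succ, Finset.sum_range_succ, derivativeFun_add, ih]
    rw [step, Finset.sum_range_succ' (fun i => derivativeFun (C (coeff i h) * u ^ i))]
    have h0 : derivativeFun (C (coeff 0 h) * u ^ 0) = 0 := by
      rw [pow_zero, mul_one, derivativeFun_C']
    rw [h0, add_zero, Finset.sum_mul]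
    apply Finset.sum_congr rfl
    intro j _
    rw [derivativeFun_mul, derivativeFun_C', smul_zero, add_zero,
      derivativeFun_pow_succ, coeff_derivativeFun']
    rw [map_mul, map_add, map_natCast, map_one]
    simp only [smul_eq_mul]
    ring
  rw [hD, coeff_mul, coeff_mul]
  apply Finset.sum_congr rfl
  rintro ⟨p, q⟩ hpq
  rw [Finset.HasAntidiagonal.mem_antidiagonal] at hpq
  rw [coeff_pcomp_trunc (derivativeFun h) u hu (show p < n + 1 by omega)]

lemma constantCoeff_pint {K : Type*} [Field K] (f : K⟦X⟧) :
    constantCoeff (pint f) = 0 := by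
  rw [← coeff_zero_eq_constantCoeff, pint, coeff_mk, if_pos rfl]

lemma derivativeFun_pint {K : Type*} [Field K] [CharZero K] (f : K⟦X⟧) :
    derivativeFun (pint f) = f := by
  ext n
  rw [coeff_derivativeFun', pint, coeff_mk, if_neg (Nat.succ_ne_zero n)]
  have : ((n : K) + 1) ≠ 0 := by exact_mod_cast Nat.succ_ne_zero n
  push_cast
  field_simp

lemma ode_unique {K : Type*} [Field K] [CharZero K] (A d : K⟦X⟧)
    (hd0 : constantCoeff d = 0) (hd : derivativeFun d = A * d) : d = 0 := by
  have main : ∀ n, coeff n d = 0 := by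
    intro n
    induction n using Nat.strong_induction_on with
    | _ n ih =>
      match n with
      | 0 => rwa [coeff_zero_eq_constantCoeff]
      | m + 1 =>
        have h1 : coeff m (derivativeFun d) = coeff m (A * d) := by rw [hd]
        rw [coeff_derivativeFun', coeff_mul] at h1
        have h2 : ∑ p ∈ Finset.HasAntidiagonal.antidiagonal m, coeff p.1 A * coeff p.2 d = 0 := by
          apply Finset.sum_eq_zero
          rintro ⟨p, q⟩ hpq
          rw [Finset.HasAntidiagonal.mem_antidiagonal] at hpq
          rw [ih q (by omega), mul_zero]
        rw [h2] at h1
        have h3 : ((m : K) + 1) ≠ 0 := by exact_mod_cast Nat.succ_ne_zero m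
        exact (mul_eq_zero.mp h1).resolve_right h3
  ext n
  simp [main n]

/-- `z = h(y)·∫w` is the unique power series with constant term `0` satisfying
the variational equation `z' = w·h(y) + g·h'(y)·z`, where `y = Y(g)`. -/
theorem stmt5 {K : Type*} [Field K] [CharZero K] (g h w y : K⟦X⟧)
    (hh : constantCoeff h = 1)
    (hy0 : constantCoeff y = 0) (hy : derivativeFun y = g * pcomp h y) :
    ∀ z : K⟦X⟧,
      (constantCoeff z = 0 ∧
        derivativeFun z = w * pcomp h y + g * pcomp (derivativeFun h) y * z) ↔
      z = pcomp h y * pint w := by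
  intro z
  set H := pcomp h y with hH
  have hH' : derivativeFun H = pcomp (derivativeFun h) y * (g * H) := by
    rw [hH, derivativeFun_pcomp h y hy0, hy]
  have hz00 : constantCoeff (H * pint w) = 0 := by
    rw [map_mul, constantCoeff_pint, mul_zero]
  have hz0' : derivativeFun (H * pint w) = w * H
      + g * pcomp (derivativeFun h) y * (H * pint w) := by
    rw [derivativeFun_mul, hH', derivativeFun_pint]
    simp only [smul_eq_mul]
    ring
  constructor
  · rintro ⟨h0, heq⟩
    have hd0 : constantCoeff (z - H * pint w) = 0 := by
      rw [map_sub, h0, hz00, sub_zero]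
    have hd : derivativeFun (z - H * pint w)
        = (g * pcomp (derivativeFun h) y) * (z - H * pint w) := by
      rw [derivativeFun_sub, heq, hz0']
      ring
    have := ode_unique _ _ hd0 hd
    linear_combination this
  · rintro rfl
    exact ⟨hz00, hz0'⟩
end

section
/- Let n ≥ 1, κ ≥ 1 (with κ ≥ 2 if p = 2), and m ≥ 0 with n ≤ 2m + 1. Let g, h ∈ ℤ_p⟦t⟧ with h having constant term 1, and suppose the coefficient of t^i in Y(g) lies in ℤ_p for all 0 ≤ i ≤ n. If u ∈ ℤ_p⟦t⟧ has constant term 0 and satisfies u ≡ Y(g) (mod (p^κ, t^{m+1})), then the exact Newton iterate N_g(u) = u - h(u)·∫(u'/h(u) - g) satisfies N_g(u) ≡ Y(g) (mod (p^κ, t^{n+1})). -/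
open PowerSeries

namespace Stmt10

open Finset

variable {p : ℕ} [hp : Fact p.Prime]

local notation "K" => ℚ_[p]

/-- divided Taylor coefficients -/
noncomputable def T (f : K⟦X⟧) (j : ℕ) : K⟦X⟧ :=
  PowerSeries.mk fun k => (Nat.choose (k + j) j : K) * coeff (k + j) f

lemma coeff_pcomp (h u : K⟦X⟧) (n : ℕ) :
    coeff n (pcomp h u) = ∑ i ∈ range (n + 1), coeff i h * coeff n (u ^ i) :=
  coeff_mk _ _

lemma coeff_derivativeFun' (f : K⟦X⟧) (n : ℕ) :
    coeff n (derivativeFun f) = coeff (n + 1) f * (n + 1) :=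
  coeff_derivative f n

lemma derivativeFun_C' (r : K) : derivativeFun (PowerSeries.C r) = 0 :=
  derivative_C

lemma norm_sum_le {ι : Type*} (s : Finset ι) (f : ι → K) {C : ℝ} (h0 : 0 ≤ C)
    (h : ∀ i ∈ s, ‖f i‖ ≤ C) : ‖∑ i ∈ s, f i‖ ≤ C :=
  IsUltrametricDist.norm_sum_le_of_forall_le_of_nonneg h0 h

lemma coeff_mul_bound {f g : K⟦X⟧} {a : ℕ} {c d : ℝ} (hc : 0 ≤ c) (hd : 0 ≤ d)
    (hf : ∀ k ≤ a, ‖coeff k f‖ ≤ c) (hg : ∀ k ≤ a, ‖coeff k g‖ ≤ d) :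
    ‖coeff a (f * g)‖ ≤ c * d := by
  rw [PowerSeries.coeff_mul]
  refine norm_sum_le _ _ (mul_nonneg hc hd) ?_
  intro x hx
  rw [Finset.HasAntidiagonal.mem_antidiagonal] at hx
  rw [norm_mul]
  exact mul_le_mul (hf x.1 (by omega)) (hg x.2 (by omega)) (norm_nonneg _) hc

lemma coeff_pow_bound {f : K⟦X⟧} {a : ℕ} {c : ℝ} (hc : 0 ≤ c) (hc1 : c ≤ 1)
    (hf : ∀ k ≤ a, ‖coeff k f‖ ≤ c) (j : ℕ) (hj : 1 ≤ j) :
    ∀ k ≤ a, ‖coeff k (f ^ j)‖ ≤ c ^ j := by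
  obtain ⟨j, rfl⟩ : ∃ j', j = j' + 1 := ⟨j - 1, by omega⟩
  clear hj
  induction j with
  | zero => simpa using hf
  | succ j ih =>
      intro k hk
      rw [pow_succ]
      have := coeff_mul_bound (pow_nonneg hc _) hc
        (fun k' hk' => ih k' (hk'.trans hk)) (fun k' hk' => hf k' (hk'.trans hk))
      rw [← pow_succ]
      exact this

lemma coeff_pow_le_one {f : K⟦X⟧} {a : ℕ} (hf : ∀ k ≤ a, ‖coeff k f‖ ≤ 1) (j : ℕ) :
    ∀ k ≤ a, ‖coeff k (f ^ j)‖ ≤ 1 := by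
  rcases Nat.eq_zero_or_pos j with rfl | hj
  · intro k hk
    simp only [pow_zero, PowerSeries.coeff_one]
    split <;> simp
  · intro k hk
    have := coeff_pow_bound zero_le_one le_rfl hf j hj k hk
    simpa using this

lemma pcomp_bound {h y : K⟦X⟧} {a : ℕ} (hh : ∀ k, ‖coeff k h‖ ≤ 1)
    (hy : ∀ k ≤ a, ‖coeff k y‖ ≤ 1) : ∀ k ≤ a, ‖coeff k (pcomp h y)‖ ≤ 1 := by
  intro k hk
  rw [coeff_pcomp]
  refine norm_sum_le _ _ zero_le_one ?_
  intro i _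
  rw [norm_mul]
  calc ‖coeff i h‖ * ‖coeff k (y ^ i)‖ ≤ 1 * 1 :=
        mul_le_mul (hh i) (coeff_pow_le_one (fun k' hk' => hy k' (hk'.trans hk)) i k le_rfl)
          (norm_nonneg _) zero_le_one
    _ = 1 := by ring

lemma inv_integral {h : K⟦X⟧} (hh : ∀ k, ‖coeff k h‖ ≤ 1)
    (hh1 : constantCoeff h = 1) : ∀ k, ‖coeff k h⁻¹‖ ≤ 1 := by
  intro k
  induction k using Nat.strong_induction_on with
  | _ k ih =>
    rw [PowerSeries.coeff_inv]
    split
    · rw [hh1]; simp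
    · rw [hh1]
      simp only [inv_one, neg_mul, one_mul, norm_neg]
      refine norm_sum_le _ _ zero_le_one ?_
      intro x hx
      rw [Finset.HasAntidiagonal.mem_antidiagonal] at hx
      split
      · rename_i hlt
        rw [norm_mul]
        exact (mul_le_mul (hh x.1) (ih x.2 hlt) (norm_nonneg _) zero_le_one).trans
          (by norm_num)
      · simp

lemma coeff_pow_eq_zero {u : K⟦X⟧} (hu : constantCoeff u = 0) {a i : ℕ} (h : a < i) :
    coeff a (u ^ i) = 0 := by
  have h1 : (X : K⟦X⟧) ∣ u := PowerSeries.X_dvd_iff.2 hu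
  have h2 : (X : K⟦X⟧) ^ i ∣ u ^ i := pow_dvd_pow_of_dvd h1 i
  exact PowerSeries.X_pow_dvd_iff.1 h2 a h

lemma coeff_pcomp_ext {f u : K⟦X⟧} (hu : constantCoeff u = 0) {n N : ℕ} (hnN : n ≤ N) :
    coeff n (pcomp f u) = ∑ i ∈ range (N + 1), coeff i f * coeff n (u ^ i) := by
  rw [coeff_pcomp]
  refine Finset.sum_subset (Finset.range_subset_range.2 (by omega)) ?_
  intro i hi hni
  rw [Finset.mem_range] at hi hni
  rw [coeff_pow_eq_zero hu (by omega), mul_zero]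

/-- congruence mod `t^{n+1}` -/
def MEq (n : ℕ) (A B : K⟦X⟧) : Prop := ∀ i ≤ n, coeff i A = coeff i B

lemma MEq.mul {n : ℕ} {A A' B B' : K⟦X⟧} (hA : MEq n A A') (hB : MEq n B B') :
    MEq n (A * B) (A' * B') := by
  intro i hi
  rw [PowerSeries.coeff_mul, PowerSeries.coeff_mul]
  refine Finset.sum_congr rfl ?_
  intro x hx
  rw [Finset.HasAntidiagonal.mem_antidiagonal] at hx
  rw [hA x.1 (by omega), hB x.2 (by omega)]

lemma MEq.sub {n : ℕ} {A A' B B' : K⟦X⟧} (hA : MEq n A A') (hB : MEq n B B') :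
    MEq n (A - B) (A' - B') := by
  intro i hi
  simp [map_sub, hA i hi, hB i hi]

lemma pcomp_mul {f g u : K⟦X⟧} (hu : constantCoeff u = 0) :
    pcomp (f * g) u = pcomp f u * pcomp g u := by
  ext nn
  have L : coeff nn (pcomp (f * g) u) =
      ∑ s ∈ range (nn + 1), ∑ x ∈ Finset.HasAntidiagonal.antidiagonal s,
        coeff x.1 f * coeff x.2 g * coeff nn (u ^ (x.1 + x.2)) := by
    rw [coeff_pcomp]
    refine Finset.sum_congr rfl fun s _ => ?_
    rw [PowerSeries.coeff_mul, Finset.sum_mul]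
    refine Finset.sum_congr rfl fun x hx => ?_
    rw [Finset.HasAntidiagonal.mem_antidiagonal] at hx
    rw [hx]
  have R : coeff nn (pcomp f u * pcomp g u) =
      ∑ a ∈ range (nn + 1), ∑ b ∈ range (nn + 1),
        coeff a f * coeff b g * coeff nn (u ^ (a + b)) := by
    rw [PowerSeries.coeff_mul]
    have step1 : ∀ x ∈ Finset.HasAntidiagonal.antidiagonal nn,
        coeff x.1 (pcomp f u) * coeff x.2 (pcomp g u) =
        ∑ a ∈ range (nn + 1), ∑ b ∈ range (nn + 1),
          coeff a f * coeff b g * (coeff x.1 (u ^ a) * coeff x.2 (u ^ b)) := by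
      intro x hx
      rw [Finset.HasAntidiagonal.mem_antidiagonal] at hx
      rw [coeff_pcomp_ext hu (show x.1 ≤ nn by omega),
        coeff_pcomp_ext hu (show x.2 ≤ nn by omega), Finset.sum_mul_sum]
      refine Finset.sum_congr rfl fun a _ => Finset.sum_congr rfl fun b _ => by ring
    rw [Finset.sum_congr rfl step1, Finset.sum_comm]
    refine Finset.sum_congr rfl fun a _ => ?_
    rw [Finset.sum_comm]
    refine Finset.sum_congr rfl fun b _ => ?_
    rw [← Finset.mul_sum, pow_add, PowerSeries.coeff_mul]
  have hdisj : (↑(range (nn + 1)) : Set ℕ).PairwiseDisjoint Finset.HasAntidiagonal.antidiagonal := by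
    intro s hs t ht hst
    simp only [Function.onFun]
    refine Finset.disjoint_left.2 fun x hxs hxt => hst ?_
    rw [Finset.HasAntidiagonal.mem_antidiagonal] at hxs hxt
    omega
  have hsub : (range (nn + 1)).biUnion Finset.HasAntidiagonal.antidiagonal ⊆ range (nn + 1) ×ˢ range (nn + 1) := by
    intro x hx
    rw [Finset.mem_biUnion] at hx
    obtain ⟨s, hs, hxs⟩ := hx
    rw [Finset.mem_range] at hs
    rw [Finset.HasAntidiagonal.mem_antidiagonal] at hxs
    rw [Finset.mem_product, Finset.mem_range, Finset.mem_range]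
    omega
  have hzero : ∀ x ∈ range (nn + 1) ×ˢ range (nn + 1),
      x ∉ (range (nn + 1)).biUnion Finset.HasAntidiagonal.antidiagonal →
      coeff x.1 f * coeff x.2 g * coeff nn (u ^ (x.1 + x.2)) = 0 := by
    intro x _ hnx
    have hgt : nn < x.1 + x.2 := by
      by_contra hle
      push_neg at hle
      apply hnx
      rw [Finset.mem_biUnion]
      exact ⟨x.1 + x.2, Finset.mem_range.2 (by omega), Finset.HasAntidiagonal.mem_antidiagonal.2 rfl⟩
    rw [coeff_pow_eq_zero hu hgt, mul_zero]
  rw [L, R, ← Finset.sum_biUnion hdisj, Finset.sum_subset hsub hzero, Finset.sum_product]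

lemma pcomp_one (u : K⟦X⟧) : pcomp 1 u = 1 := by
  ext n
  rw [coeff_pcomp, Finset.sum_eq_single 0]
  · simp
  · intro i _ hi
    simp [PowerSeries.coeff_one, hi]
  · simp

lemma constantCoeff_pcomp (f u : K⟦X⟧) :
    constantCoeff (pcomp f u) = constantCoeff f := by
  rw [← PowerSeries.coeff_zero_eq_constantCoeff_apply, ← PowerSeries.coeff_zero_eq_constantCoeff_apply,
    coeff_pcomp]
  simp

lemma pcomp_inv {h u : K⟦X⟧} (hu : constantCoeff u = 0)
    (hh : constantCoeff h ≠ 0) : (pcomp h u)⁻¹ = pcomp h⁻¹ u := by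
  have h0 : constantCoeff (pcomp h u) ≠ 0 := by
    rw [constantCoeff_pcomp]; exact hh
  rw [PowerSeries.inv_eq_iff_mul_eq_one h0, ← pcomp_mul hu,
    PowerSeries.inv_mul_cancel h hh, pcomp_one]

lemma pcomp_smul (c : K) (f u : K⟦X⟧) : pcomp (c • f) u = c • pcomp f u := by
  ext nn
  rw [coeff_pcomp, map_smul, coeff_pcomp, Finset.smul_sum]
  refine Finset.sum_congr rfl fun i _ => ?_
  rw [map_smul]
  simp only [smul_eq_mul]
  ring

lemma derivativeFun_pint (f : K⟦X⟧) : derivativeFun (pint f) = f := by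
  ext nn
  rw [coeff_derivativeFun']
  simp only [pint, coeff_mk, Nat.succ_ne_zero, if_false, Nat.add_sub_cancel]
  push_cast
  rw [div_mul_cancel₀]
  exact Nat.cast_add_one_ne_zero nn

lemma constantCoeff_pint (f : K⟦X⟧) : constantCoeff (pint f) = 0 := by
  simp [pint, constantCoeff_mk]

lemma eq_of_derivativeFun_eq {A B : K⟦X⟧} (h1 : derivativeFun A = derivativeFun B)
    (h0 : constantCoeff A = constantCoeff B) : A = B := by
  ext nn
  cases nn with
  | zero => simpa [PowerSeries.coeff_zero_eq_constantCoeff_apply] using h0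
  | succ k =>
      have h2 := congrArg (coeff k) h1
      rw [coeff_derivativeFun', coeff_derivativeFun'] at h2
      exact mul_right_cancel₀ (Nat.cast_add_one_ne_zero k) h2

lemma derivativeFun_sub (A B : K⟦X⟧) :
    derivativeFun (A - B) = derivativeFun A - derivativeFun B := by
  ext nn
  simp [coeff_derivativeFun', map_sub, sub_mul]

lemma derivativeFun_sum {ι : Type*} (s : Finset ι) (F : ι → K⟦X⟧) :
    derivativeFun (∑ i ∈ s, F i) = ∑ i ∈ s, derivativeFun (F i) := by
  ext nn
  simp [coeff_derivativeFun', Finset.sum_mul]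

lemma derivativeFun_pow (u : K⟦X⟧) (i : ℕ) :
    derivativeFun (u ^ (i + 1)) = ((i + 1 : ℕ) : K⟦X⟧) * u ^ i * derivativeFun u := by
  induction i with
  | zero => simp
  | succ i ih =>
      have h1 : u ^ (i + 2) = u ^ (i + 1) * u := by ring
      rw [h1, PowerSeries.derivativeFun_mul, ih]
      simp only [smul_eq_mul]
      push_cast
      ring

lemma coeff_mul_pow_eq_zero {y e : K⟦X⟧} (hy0 : constantCoeff y = 0)
    (he0 : constantCoeff e = 0) {i q j : ℕ} (h : i < q + j) :
    coeff i (y ^ q * e ^ j) = 0 := by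
  have h1 : (X : K⟦X⟧) ^ (q + j) ∣ y ^ q * e ^ j := by
    rw [pow_add]
    exact mul_dvd_mul (pow_dvd_pow_of_dvd (PowerSeries.X_dvd_iff.2 hy0) q)
      (pow_dvd_pow_of_dvd (PowerSeries.X_dvd_iff.2 he0) j)
  exact PowerSeries.X_pow_dvd_iff.1 h1 i h

lemma chain_rule {f u : K⟦X⟧} (hu : constantCoeff u = 0) :
    derivativeFun (pcomp f u) = pcomp (derivativeFun f) u * derivativeFun u := by
  ext nn
  rw [coeff_derivativeFun']
  have h1 : coeff (nn + 1) (pcomp f u)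
      = coeff (nn + 1) (∑ i ∈ range (nn + 2), PowerSeries.C (coeff i f) * u ^ i) := by
    rw [coeff_pcomp_ext hu (le_refl (nn + 1)), map_sum]
    exact Finset.sum_congr rfl fun i _ => (PowerSeries.coeff_C_mul _ _ _).symm
  rw [h1, ← coeff_derivativeFun']
  have h2 : ∀ i ∈ range (nn + 2), derivativeFun (PowerSeries.C (coeff i f) * u ^ i)
      = PowerSeries.C (coeff i f) * derivativeFun (u ^ i) := by
    intro i _
    rw [PowerSeries.derivativeFun_mul, derivativeFun_C']
    simp [smul_eq_mul, mul_comm]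
  have h4 : derivativeFun (∑ i ∈ range (nn + 2), PowerSeries.C (coeff i f) * u ^ i)
      = (∑ k ∈ range (nn + 1), PowerSeries.C (coeff k (derivativeFun f)) * u ^ k)
          * derivativeFun u := by
    rw [derivativeFun_sum, Finset.sum_congr rfl h2, Finset.sum_range_succ']
    simp only [pow_zero, PowerSeries.derivativeFun_one, mul_zero, add_zero]
    rw [Finset.sum_mul]
    refine Finset.sum_congr rfl fun k _ => ?_
    rw [derivativeFun_pow, coeff_derivativeFun', map_mul]
    have h5 : (PowerSeries.C (R := K)) ((k : K) + 1) = ((k + 1 : ℕ) : K⟦X⟧) := by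
      rw [map_add, map_one, map_natCast]
      push_cast
      ring
    rw [h5]
    ring
  rw [h4]
  have m : MEq nn (∑ k ∈ range (nn + 1), PowerSeries.C (coeff k (derivativeFun f)) * u ^ k)
      (pcomp (derivativeFun f) u) := by
    intro i hi
    rw [coeff_pcomp_ext hu hi, map_sum]
    exact Finset.sum_congr rfl fun k _ => (PowerSeries.coeff_C_mul _ _ _)
  exact MEq.mul m (fun _ _ => rfl) nn le_rfl

lemma T_zero (f : K⟦X⟧) : T f 0 = f := by
  ext k
  simp [T, coeff_mk]

lemma T_one (f : K⟦X⟧) : T f 1 = derivativeFun f := by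
  ext k
  simp [T, coeff_mk, coeff_derivativeFun', Nat.choose_one_right, mul_comm]

lemma taylor (f y e : K⟦X⟧) (hy0 : constantCoeff y = 0) (he0 : constantCoeff e = 0)
    (n : ℕ) : ∀ i ≤ n,
    coeff i (pcomp f (y + e)) = coeff i (∑ j ∈ range (n + 1), pcomp (T f j) y * e ^ j) := by
  intro i hi
  have hye : constantCoeff (y + e) = 0 := by rw [map_add, hy0, he0, add_zero]
  have hR : coeff i (∑ j ∈ range (n + 1), pcomp (T f j) y * e ^ j)
      = ∑ k ∈ range (n + 1), ∑ j ∈ range (n + 1),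
          coeff k (T f j) * coeff i (y ^ k * e ^ j) := by
    rw [map_sum]
    have h0 : ∀ j ∈ range (n+1), coeff i (pcomp (T f j) y * e ^ j)
        = ∑ k ∈ range (n + 1), coeff k (T f j) * coeff i (y ^ k * e ^ j) := by
      intro j _
      rw [PowerSeries.coeff_mul]
      have h0' : ∀ x ∈ Finset.HasAntidiagonal.antidiagonal i,
          coeff x.1 (pcomp (T f j) y) * coeff x.2 (e ^ j)
          = ∑ k ∈ range (n + 1), coeff k (T f j)
              * (coeff x.1 (y ^ k) * coeff x.2 (e ^ j)) := by
        intro x hx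
        rw [Finset.HasAntidiagonal.mem_antidiagonal] at hx
        rw [coeff_pcomp_ext hy0 (show x.1 ≤ n by omega), Finset.sum_mul]
        exact Finset.sum_congr rfl fun k _ => by ring
      rw [Finset.sum_congr rfl h0', Finset.sum_comm]
      refine Finset.sum_congr rfl fun k _ => ?_
      rw [← Finset.mul_sum, PowerSeries.coeff_mul]
    rw [Finset.sum_congr rfl h0, Finset.sum_comm]
  have hL : coeff i (pcomp f (y + e))
      = ∑ q ∈ range (n + 1), ∑ s ∈ range (n + 1),
          coeff s f * (Nat.choose s q : K) * coeff i (y ^ q * e ^ (s - q)) := by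
    rw [coeff_pcomp_ext hye hi]
    have h1 : ∀ s ∈ range (n + 1), coeff s f * coeff i ((y + e) ^ s)
        = ∑ q ∈ range (n + 1),
            coeff s f * (Nat.choose s q : K) * coeff i (y ^ q * e ^ (s - q)) := by
      intro s hs
      rw [Finset.mem_range] at hs
      rw [add_pow, map_sum, Finset.mul_sum]
      rw [← Finset.sum_subset (Finset.range_subset_range.2 (show s + 1 ≤ n + 1 by omega))
        (fun q hq hnq => by
          have hlt : s < q := by
            rw [Finset.mem_range] at hq hnq
            omega
          rw [Nat.choose_eq_zero_of_lt hlt]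
          simp)]
      refine Finset.sum_congr rfl fun q hq => ?_
      have hcast : y ^ q * e ^ (s - q) * ((Nat.choose s q : ℕ) : K⟦X⟧)
          = PowerSeries.C ((Nat.choose s q : ℕ) : K) * (y ^ q * e ^ (s - q)) := by
        rw [← map_natCast (PowerSeries.C (R := K))]
        ring
      rw [hcast, PowerSeries.coeff_C_mul]
      ring
    rw [Finset.sum_congr rfl h1, Finset.sum_comm]
  rw [hL, hR]
  refine Finset.sum_congr rfl fun q hq => ?_
  rw [Finset.mem_range] at hq
  have hdrop : ∑ s ∈ range (n + 1),
      coeff s f * (Nat.choose s q : K) * coeff i (y ^ q * e ^ (s - q))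
      = ∑ j ∈ range (n + 1 - q),
          coeff (q + j) f * (Nat.choose (q + j) q : K) * coeff i (y ^ q * e ^ j) := by
    nth_rewrite 1 [Finset.range_eq_Ico]
    rw [← Finset.sum_Ico_consecutive _ (Nat.zero_le q) (by omega : q ≤ n + 1)]
    have hz : ∑ s ∈ Finset.Ico 0 q,
        coeff s f * (Nat.choose s q : K) * coeff i (y ^ q * e ^ (s - q)) = 0 := by
      refine Finset.sum_eq_zero fun s hs => ?_
      rw [Finset.mem_Ico] at hs
      rw [Nat.choose_eq_zero_of_lt (by omega)]
      simp
    rw [hz, zero_add, Finset.sum_Ico_eq_sum_range]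
    exact Finset.sum_congr rfl fun j _ => by rw [Nat.add_sub_cancel_left]
  rw [hdrop]
  rw [← Finset.sum_subset (Finset.range_subset_range.2 (show n + 1 - q ≤ n + 1 by omega))
    (fun j hj hnj => by
      have hgt : i < q + j := by
        rw [Finset.mem_range] at hj hnj
        omega
      rw [coeff_mul_pow_eq_zero hy0 he0 hgt]
      simp)]
  refine Finset.sum_congr rfl fun j hj => ?_
  simp only [T, coeff_mk]
  rw [show q + j = j + q by ring, Nat.choose_symm_add]
  ring

lemma norm_natCast_le_one (j : ℕ) : ‖((j : ℕ) : K)‖ ≤ 1 := by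
  have := Padic.norm_int_le_one (p := p) (j : ℤ)
  push_cast at this
  exact this

lemma T_pint_integral {f : K⟦X⟧} (hf : ∀ k, ‖coeff k f‖ ≤ 1) (j : ℕ) :
    ∀ k, ‖((j + 1 : ℕ) : K) * coeff k (T (pint f) (j + 1))‖ ≤ 1 := by
  intro k
  have hid : ((j + 1 : ℕ) : K) * coeff k (T (pint f) (j + 1))
      = (Nat.choose (k + j) j : K) * coeff (k + j) f := by
    simp only [T, coeff_mk, pint]
    have hne : k + (j + 1) ≠ 0 := by omega
    rw [if_neg hne]
    have hsub : k + (j + 1) - 1 = k + j := by omega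
    rw [hsub]
    have hidx : k + (j + 1) = k + j + 1 := by omega
    simp only [hidx]
    have hnat : (k + j + 1) * Nat.choose (k + j) j
        = Nat.choose (k + j + 1) (j + 1) * (j + 1) := Nat.add_one_mul_choose_eq (k + j) j
    have hcast : ((k + j + 1 : ℕ) : K) * (((k + j).choose j : ℕ) : K)
        = (((k + j + 1).choose (j + 1) : ℕ) : K) * ((j + 1 : ℕ) : K) := by
      exact_mod_cast hnat
    have hden : ((k + j + 1 : ℕ) : K) ≠ 0 := Nat.cast_ne_zero.2 (by omega)
    push_cast at hcast hden ⊢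
    have hre : ((j : K) + 1) * ((((k + j + 1).choose (j + 1) : ℕ) : K)
        * (coeff (k + j) f / ((k : K) + (j : K) + 1)))
        = (((j : K) + 1) * (((k + j + 1).choose (j + 1) : ℕ) : K) / ((k : K) + (j : K) + 1))
          * coeff (k + j) f := by
      ring
    rw [hre]
    have hco : ((j : K) + 1) * (((k + j + 1).choose (j + 1) : ℕ) : K) / ((k : K) + (j : K) + 1)
        = (((k + j).choose j : ℕ) : K) := by
      rw [div_eq_iff hden]
      linear_combination -hcast
    rw [hco]
  rw [hid, norm_mul]
  exact (mul_le_mul (norm_natCast_le_one _) (hf _) (norm_nonneg _) zero_le_one).trans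
    (by norm_num)

lemma norm_natCast_lower (j κ : ℕ) (hκ : 1 ≤ κ) :
    (p : ℝ) ^ (-(((j + 1) * κ : ℕ) : ℤ)) ≤ ‖((j + 2 : ℕ) : K)‖ := by
  have hne : (j + 2 : ℕ) ≠ 0 := by omega
  have hj0 : ((j + 2 : ℕ) : K) ≠ 0 := Nat.cast_ne_zero.2 hne
  rw [Padic.norm_eq_zpow_neg_valuation hj0, Padic.valuation_natCast]
  have hv : p ^ padicValNat p (j + 2) ≤ j + 2 :=
    Nat.le_of_dvd (by omega) pow_padicValNat_dvd
  have h2 : j + 2 ≤ 2 ^ (j + 1) := Nat.lt_two_pow_self (n := j + 1)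
  have h3 : 2 ^ (j + 1) ≤ p ^ ((j + 1) * κ) := by
    calc 2 ^ (j + 1) ≤ p ^ (j + 1) := Nat.pow_le_pow_left hp.1.two_le _
      _ ≤ p ^ ((j + 1) * κ) := Nat.pow_le_pow_right hp.1.one_lt.le
          (Nat.le_mul_of_pos_right _ (by omega))
  have hval : padicValNat p (j + 2) ≤ (j + 1) * κ :=
    (Nat.pow_le_pow_iff_right hp.1.one_lt).1 ((hv.trans h2).trans h3)
  have hbase : (1 : ℝ) ≤ (p : ℝ) := by exact_mod_cast hp.1.one_le
  apply zpow_le_zpow_right₀ hbase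
  omega

lemma key {m κ n : ℕ} (hκ : 1 ≤ κ) {e : K⟦X⟧} (hsm : ∀ k ≤ m, ‖coeff k e‖ ≤ (p : ℝ) ^ (-(κ : ℤ)))
    (hint : ∀ k ≤ n, ‖coeff k e‖ ≤ 1) (hn2m : n ≤ 2 * m + 1) (j : ℕ) :
    ∀ b ≤ n, ‖coeff b (e ^ (j + 2))‖ ≤ ‖((j + 2 : ℕ) : K)‖ * (p : ℝ) ^ (-(κ : ℤ)) := by
  intro b hb
  set P : K⟦X⟧ := PowerSeries.mk fun k => if k ≤ m then coeff k e else 0 with hPdef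
  set Q : K⟦X⟧ := e - P with hQdef
  have hppos : (0:ℝ) < (p : ℝ) ^ (-(κ : ℤ)) := by
    apply zpow_pos
    exact_mod_cast hp.1.pos
  have hple1 : (p : ℝ) ^ (-(κ : ℤ)) ≤ 1 := by
    apply zpow_le_one_of_nonpos₀ (by exact_mod_cast hp.1.one_le)
    omega
  have hP1 : ∀ k, ‖coeff k P‖ ≤ (p : ℝ) ^ (-(κ : ℤ)) := by
    intro k
    rw [hPdef, coeff_mk]
    split
    · exact hsm k (by assumption)
    · simp [hppos.le]
  have hQm : ∀ k ≤ m, coeff k Q = 0 := by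
    intro k hk
    rw [hQdef, map_sub, hPdef, coeff_mk, if_pos hk, sub_self]
  have hQint : ∀ k ≤ n, ‖coeff k Q‖ ≤ 1 := by
    intro k hk
    rw [hQdef, map_sub]
    calc ‖coeff k e - coeff k P‖ ≤ max ‖coeff k e‖ ‖coeff k P‖ := by
          rw [sub_eq_add_neg]
          simpa using Padic.nonarchimedean (coeff k e) (-(coeff k P))
      _ ≤ 1 := max_le (hint k hk) ((hP1 k).trans hple1)
  have hePQ : e = P + Q := by rw [hQdef]; ring
  have hXQ : (X : K⟦X⟧) ^ (m + 1) ∣ Q := by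
    rw [PowerSeries.X_pow_dvd_iff]
    intro k hk
    exact hQm k (by omega)
  rw [hePQ, add_pow, map_sum]
  refine norm_sum_le _ _ (mul_nonneg (norm_nonneg _) hppos.le) ?_
  intro k hk
  rw [Finset.mem_range] at hk
  have hchoose : 0 ≤ ‖((j + 2 : ℕ) : K)‖ * (p : ℝ) ^ (-(κ : ℤ)) :=
    mul_nonneg (norm_nonneg _) hppos.le
  rcases lt_trichotomy k (j + 1) with hk1 | hk1 | hk1
  · -- Q-exponent j + 2 - k ≥ 2 : coefficient vanishes
    have h1 : (X : K⟦X⟧) ^ ((m + 1) * (j + 2 - k)) ∣ Q ^ (j + 2 - k) := by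
      rw [pow_mul]
      exact pow_dvd_pow_of_dvd hXQ _
    have h2 : (X : K⟦X⟧) ^ ((m + 1) * (j + 2 - k)) ∣
        P ^ k * Q ^ (j + 2 - k) * (((j + 2).choose k : ℕ) : K⟦X⟧) :=
      (h1.mul_left (P ^ k)).mul_right _
    have h3 : b < (m + 1) * (j + 2 - k) := by
      have h4 : 2 ≤ j + 2 - k := by omega
      have h5 : (m + 1) * 2 ≤ (m + 1) * (j + 2 - k) := Nat.mul_le_mul_left _ h4
      omega
    rw [PowerSeries.X_pow_dvd_iff.1 h2 b h3]
    simpa using hchoose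
  · -- k = j + 1 : term j·P^{j+1}·Q
    subst hk1
    have hc : ((j + 2).choose (j + 1) : ℕ) = j + 2 := Nat.choose_succ_self_right (j + 1)
    rw [hc]
    have hcast : (((j + 2 : ℕ)) : K⟦X⟧) = PowerSeries.C (((j + 2 : ℕ)) : K) :=
      (map_natCast (PowerSeries.C (R := K)) _).symm
    rw [hcast, mul_comm (P ^ (j + 1) * Q ^ (j + 2 - (j + 1)))
      (PowerSeries.C (((j + 2 : ℕ)) : K)), PowerSeries.coeff_C_mul, norm_mul]
    have hQ1 : j + 2 - (j + 1) = 1 := by omega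
    rw [hQ1, pow_one]
    have hPj : ∀ k' ≤ b, ‖coeff k' (P ^ (j + 1))‖ ≤ (p : ℝ) ^ (-(κ : ℤ)) := by
      intro k' hk'
      have := coeff_pow_bound hppos.le hple1 (fun k'' _ => hP1 k'') (j + 1) (by omega) k' hk'
      refine this.trans ?_
      calc ((p : ℝ) ^ (-(κ : ℤ))) ^ (j + 1) ≤ ((p : ℝ) ^ (-(κ : ℤ))) ^ 1 :=
            pow_le_pow_of_le_one hppos.le hple1 (by omega)
        _ = (p : ℝ) ^ (-(κ : ℤ)) := pow_one _
    have hbound := coeff_mul_bound hppos.le zero_le_one hPj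
      (fun k' hk' => hQint k' (hk'.trans hb))
    rw [mul_one] at hbound
    exact mul_le_mul_of_nonneg_left hbound (norm_nonneg _)
  · -- k = j + 2 : term P^{j+2}
    have hk2 : k = j + 2 := by omega
    subst hk2
    simp only [Nat.sub_self, pow_zero, mul_one, Nat.choose_self, Nat.cast_one]
    have hPj := coeff_pow_bound hppos.le hple1 (fun k'' _ => hP1 k'') (j + 2) (by omega) b le_rfl
    refine hPj.trans ?_
    have hsplit : ((p : ℝ) ^ (-(κ : ℤ))) ^ (j + 2)
        = (p : ℝ) ^ (-(((j + 1) * κ : ℕ) : ℤ)) * (p : ℝ) ^ (-(κ : ℤ)) := by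
      rw [← zpow_natCast ((p : ℝ) ^ (-(κ : ℤ))) (j + 2), ← zpow_mul, ← zpow_add₀]
      · congr 1
        push_cast
        ring
      · exact_mod_cast hp.1.ne_zero
    rw [hsplit]
    exact mul_le_mul_of_nonneg_right (norm_natCast_lower j κ hκ) hppos.le

end Stmt10

/-- if `u ∈ ℤ_p⟦t⟧`, `u(0) = 0` and `u ≡ Y(g) (mod (p^κ, t^{m+1}))` with
`n ≤ 2m + 1`, then the exact Newton iterate `N_g(u) = u - h(u)·∫(u'/h(u) - g)` satisfies
`N_g(u) ≡ Y(g) (mod (p^κ, t^{n+1}))`.  Membership `x ∈ p^κ ℤ_p` is expressed as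
`‖x‖ ≤ p^{-κ}`, and `f ∈ ℤ_p⟦t⟧` as `‖coeff i f‖ ≤ 1` for all `i`. -/
theorem stmt10 (p : ℕ) [hp : Fact p.Prime] (n κ m : ℕ) (hn : 1 ≤ n) (hκ : 1 ≤ κ)
    (hκ2 : p = 2 → 2 ≤ κ) (hm : n ≤ 2 * m + 1)
    (g h : PowerSeries ℚ_[p])
    (hg : ∀ i, ‖coeff i g‖ ≤ 1)
    (hhint : ∀ i, ‖coeff i h‖ ≤ 1) (hh1 : constantCoeff h = 1)
    (y : PowerSeries ℚ_[p])
    (hy0 : constantCoeff y = 0) (hy : derivativeFun y = g * pcomp h y)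
    (hyint : ∀ i ≤ n, ‖coeff i y‖ ≤ 1)
    (u : PowerSeries ℚ_[p])
    (huint : ∀ i, ‖coeff i u‖ ≤ 1) (hu0 : constantCoeff u = 0)
    (hucong : ∀ i ≤ m, ‖coeff i (u - y)‖ ≤ (p : ℝ) ^ (-(κ : ℤ))) :
    ∀ i ≤ n,
      ‖coeff i
          ((u - pcomp h u * pint (derivativeFun u * (pcomp h u)⁻¹ - g)) - y)‖ ≤
        (p : ℝ) ^ (-(κ : ℤ)) := by
  have hh0 : constantCoeff h ≠ 0 := by rw [hh1]; exact one_ne_zero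
  have hinv_int : ∀ k, ‖coeff k h⁻¹‖ ≤ 1 := Stmt10.inv_integral hhint hh1
  obtain ⟨n', rfl⟩ : ∃ n', n = n' + 1 := ⟨n - 1, by omega⟩
  intro i hi
  set e := u - y with he
  set H := pint h⁻¹ with hHdef
  have he0 : constantCoeff e = 0 := by rw [he, map_sub, hu0, hy0, sub_zero]
  have hyu : y + e = u := by rw [he]; ring
  have hAA'y : pcomp h y * pcomp h⁻¹ y = 1 := by
    rw [← Stmt10.pcomp_mul hy0, PowerSeries.mul_inv_cancel h hh0, Stmt10.pcomp_one]
  have hA'Ay : pcomp h⁻¹ y * pcomp h y = 1 := by rw [mul_comm]; exact hAA'y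
  have hdH : derivativeFun H = h⁻¹ := by rw [hHdef]; exact Stmt10.derivativeFun_pint h⁻¹
  have hcH : constantCoeff H = 0 := by rw [hHdef]; exact Stmt10.constantCoeff_pint h⁻¹
  have hq : pint (derivativeFun u * (pcomp h u)⁻¹ - g) = pcomp H u - pcomp H y := by
    apply Stmt10.eq_of_derivativeFun_eq
    · rw [Stmt10.derivativeFun_pint, Stmt10.derivativeFun_sub, Stmt10.chain_rule hu0,
        Stmt10.chain_rule hy0, hdH, hy, ← Stmt10.pcomp_inv hu0 hh0]
      linear_combination g * hA'Ay
    · rw [Stmt10.constantCoeff_pint, map_sub, Stmt10.constantCoeff_pcomp,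
        Stmt10.constantCoeff_pcomp, hcH, sub_zero]
  have hTH : ∀ k ≤ n' + 1, coeff k (pcomp H u)
      = coeff k (∑ j ∈ Finset.range (n' + 2), pcomp (Stmt10.T H j) y * e ^ j) := by
    intro k hk
    rw [← hyu]
    exact Stmt10.taylor H y e hy0 he0 (n' + 1) k hk
  have hTh : ∀ k ≤ n' + 1, coeff k (pcomp h u)
      = coeff k (∑ j ∈ Finset.range (n' + 2), pcomp (Stmt10.T h j) y * e ^ j) := by
    intro k hk
    rw [← hyu]
    exact Stmt10.taylor h y e hy0 he0 (n' + 1) k hk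
  set V := ∑ j ∈ Finset.range (n' + 1), pcomp (Stmt10.T h (j + 1)) y * e ^ j with hVdef
  set S2 := ∑ j ∈ Finset.range n', pcomp (Stmt10.T H (j + 2)) y * e ^ (j + 2) with hS2def
  have hidx : ∀ a : ℕ, a + 1 + 1 = a + 2 := fun a => rfl
  have hSh : (∑ j ∈ Finset.range (n' + 2), pcomp (Stmt10.T h j) y * e ^ j)
      = pcomp h y + V * e := by
    rw [Finset.sum_range_succ' _ (n' + 1), Stmt10.T_zero, pow_zero, mul_one, hVdef,
      Finset.sum_mul, add_comm]
    congr 1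
    refine Finset.sum_congr rfl fun j _ => ?_
    rw [pow_succ]
    ring
  have hSH : (∑ j ∈ Finset.range (n' + 2), pcomp (Stmt10.T H j) y * e ^ j)
      = pcomp H y + pcomp h⁻¹ y * e + S2 := by
    rw [Finset.sum_range_succ' _ (n' + 1), Finset.sum_range_succ' _ n']
    simp only [hidx]
    rw [Stmt10.T_zero, pow_zero, mul_one, Stmt10.T_one, hdH, pow_one, ← hS2def]
    ring
  have hm1 : Stmt10.MEq (n' + 1) (pcomp h u) (pcomp h y + V * e) := fun k hk => by
    rw [hTh k hk, hSh]
  have hm2 : Stmt10.MEq (n' + 1) (pcomp H u - pcomp H y) (pcomp h⁻¹ y * e + S2) := by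
    intro k hk
    rw [map_sub, hTH k hk, hSH]
    simp only [map_add]
    ring
  have hm3 : Stmt10.MEq (n' + 1) (e - pcomp h u * (pcomp H u - pcomp H y))
      (e - (pcomp h y + V * e) * (pcomp h⁻¹ y * e + S2)) :=
    Stmt10.MEq.sub (fun _ _ => rfl) (Stmt10.MEq.mul hm1 hm2)
  have hexp : e - (pcomp h y + V * e) * (pcomp h⁻¹ y * e + S2)
      = -(pcomp h y * S2) - (e * e) * (V * pcomp h⁻¹ y) - e * (V * S2) := by
    have hr : e - (pcomp h y + V * e) * (pcomp h⁻¹ y * e + S2)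
        = e * (1 - pcomp h y * pcomp h⁻¹ y) - pcomp h y * S2 - (e * e) * (V * pcomp h⁻¹ y)
          - e * (V * S2) := by ring
    rw [hr, hAA'y]
    ring
  have hNu : (u - pcomp h u * pint (derivativeFun u * (pcomp h u)⁻¹ - g)) - y
      = e - pcomp h u * (pcomp H u - pcomp H y) := by
    rw [hq, he]
    ring
  rw [hNu, hm3 i hi, hexp]
  -- norm bounds
  have hnonneg : (0 : ℝ) ≤ (p : ℝ) ^ (-(κ : ℤ)) := by positivity
  have hsubmax : ∀ a b : ℚ_[p], ‖a - b‖ ≤ max ‖a‖ ‖b‖ := fun a b => by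
    rw [sub_eq_add_neg]
    simpa using Padic.nonarchimedean a (-b)
  have heint : ∀ k ≤ n' + 1, ‖coeff k e‖ ≤ 1 := by
    intro k hk
    rw [he, map_sub]
    exact (hsubmax _ _).trans (max_le (huint k) (hyint k hk))
  have hA : ∀ k ≤ n' + 1, ‖coeff k (pcomp h y)‖ ≤ 1 :=
    Stmt10.pcomp_bound hhint hyint
  have hA' : ∀ k ≤ n' + 1, ‖coeff k (pcomp h⁻¹ y)‖ ≤ 1 :=
    Stmt10.pcomp_bound hinv_int hyint
  have hV : ∀ k ≤ n' + 1, ‖coeff k V‖ ≤ 1 := by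
    intro k hk
    rw [hVdef, map_sum]
    refine Stmt10.norm_sum_le _ _ zero_le_one ?_
    intro j _
    have hTj : ∀ k', ‖coeff k' (Stmt10.T h (j + 1))‖ ≤ 1 := by
      intro k'
      simp only [Stmt10.T, coeff_mk]
      rw [norm_mul]
      exact (mul_le_mul (Stmt10.norm_natCast_le_one _) (hhint _) (norm_nonneg _)
        zero_le_one).trans (by norm_num)
    have := Stmt10.coeff_mul_bound zero_le_one zero_le_one
      (fun k' hk' => Stmt10.pcomp_bound hTj (fun k'' hk'' => hyint k'' (hk''.trans (hk'.trans hk)))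
        k' le_rfl)
      (fun k' hk' => Stmt10.coeff_pow_le_one
        (fun k'' hk'' => heint k'' (hk''.trans (hk'.trans hk))) j k' le_rfl)
    rw [mul_one] at this
    exact this
  have hS2n : ∀ k ≤ n' + 1, ‖coeff k S2‖ ≤ (p : ℝ) ^ (-(κ : ℤ)) := by
    intro k hk
    rw [hS2def, map_sum]
    refine Stmt10.norm_sum_le _ _ hnonneg ?_
    intro j _
    have hcnz : ((j + 2 : ℕ) : ℚ_[p]) ≠ 0 := Nat.cast_ne_zero.2 (by omega)
    have hre : pcomp (Stmt10.T H (j + 2)) y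
        = (((j + 2 : ℕ) : ℚ_[p]))⁻¹ • pcomp ((((j + 2 : ℕ) : ℚ_[p])) • Stmt10.T H (j + 2)) y := by
      rw [Stmt10.pcomp_smul, smul_smul, inv_mul_cancel₀ hcnz, one_smul]
    rw [hre, smul_mul_assoc, map_smul, smul_eq_mul, norm_mul, norm_inv]
    have hBint : ∀ k', ‖coeff k' ((((j + 2 : ℕ) : ℚ_[p])) • Stmt10.T H (j + 2))‖ ≤ 1 := by
      intro k'
      rw [map_smul, smul_eq_mul]
      have h7 := Stmt10.T_pint_integral hinv_int (j + 1) k'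
      rw [hHdef]
      exact h7
    have hpow : ∀ k' ≤ k, ‖coeff k' (e ^ (j + 2))‖
        ≤ ‖((j + 2 : ℕ) : ℚ_[p])‖ * (p : ℝ) ^ (-(κ : ℤ)) := fun k' hk' =>
      Stmt10.key hκ hucong heint hm j k' (hk'.trans hk)
    have hmul := Stmt10.coeff_mul_bound zero_le_one
      (mul_nonneg (norm_nonneg _) hnonneg)
      (fun k' hk' => Stmt10.pcomp_bound hBint
        (fun k'' hk'' => hyint k'' (hk''.trans (hk'.trans hk))) k' le_rfl)
      hpow
    calc ‖((j + 2 : ℕ) : ℚ_[p])‖⁻¹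
          * ‖coeff k (pcomp ((((j + 2 : ℕ) : ℚ_[p])) • Stmt10.T H (j + 2)) y * e ^ (j + 2))‖
        ≤ ‖((j + 2 : ℕ) : ℚ_[p])‖⁻¹ * (1 * (‖((j + 2 : ℕ) : ℚ_[p])‖ * (p : ℝ) ^ (-(κ : ℤ)))) :=
          mul_le_mul_of_nonneg_left hmul (inv_nonneg.2 (norm_nonneg _))
      _ = (p : ℝ) ^ (-(κ : ℤ)) := by
          rw [one_mul, ← mul_assoc, inv_mul_cancel₀ (norm_ne_zero_iff.2 hcnz), one_mul]
  have hee : ∀ k ≤ n' + 1, ‖coeff k (e * e)‖ ≤ (p : ℝ) ^ (-(κ : ℤ)) := by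
    intro k hk
    rw [PowerSeries.coeff_mul]
    refine Stmt10.norm_sum_le _ _ hnonneg ?_
    intro x hx
    rw [Finset.HasAntidiagonal.mem_antidiagonal] at hx
    rcases le_or_gt x.1 m with h1 | h1
    · rw [norm_mul]
      calc ‖coeff x.1 e‖ * ‖coeff x.2 e‖
          ≤ (p : ℝ) ^ (-(κ : ℤ)) * 1 :=
            mul_le_mul (hucong x.1 h1) (heint x.2 (by omega)) (norm_nonneg _) hnonneg
        _ = (p : ℝ) ^ (-(κ : ℤ)) := mul_one _
    · have h2 : x.2 ≤ m := by omega
      rw [norm_mul]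
      calc ‖coeff x.1 e‖ * ‖coeff x.2 e‖
          ≤ 1 * ((p : ℝ) ^ (-(κ : ℤ))) :=
            mul_le_mul (heint x.1 (by omega)) (hucong x.2 h2) (norm_nonneg _) zero_le_one
        _ = (p : ℝ) ^ (-(κ : ℤ)) := one_mul _
  rw [map_sub, map_sub]
  refine (hsubmax _ _).trans (max_le ((hsubmax _ _).trans (max_le ?_ ?_)) ?_)
  · rw [map_neg, norm_neg]
    have := Stmt10.coeff_mul_bound zero_le_one hnonneg
      (fun k hk => hA k (hk.trans hi)) (fun k hk => hS2n k (hk.trans hi))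
    rw [one_mul] at this
    exact this
  · have hVA' : ∀ k ≤ i, ‖coeff k (V * pcomp h⁻¹ y)‖ ≤ 1 := by
      intro k hk
      have := Stmt10.coeff_mul_bound zero_le_one zero_le_one
        (fun k' hk' => hV k' ((hk'.trans hk).trans hi))
        (fun k' hk' => hA' k' ((hk'.trans hk).trans hi))
      rw [mul_one] at this
      exact this
    have := Stmt10.coeff_mul_bound hnonneg zero_le_one
      (fun k hk => hee k (hk.trans hi)) hVA'
    rw [mul_one] at this
    exact this
  · have hVS2 : ∀ k ≤ i, ‖coeff k (V * S2)‖ ≤ (p : ℝ) ^ (-(κ : ℤ)) := by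
      intro k hk
      have := Stmt10.coeff_mul_bound zero_le_one hnonneg
        (fun k' hk' => hV k' ((hk'.trans hk).trans hi))
        (fun k' hk' => hS2n k' ((hk'.trans hk).trans hi))
      rw [one_mul] at this
      exact this
    have := Stmt10.coeff_mul_bound zero_le_one hnonneg
      (fun k hk => heint k (hk.trans hi)) hVS2
    rw [one_mul] at this
    exact this
end
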